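/- Fix a real f ≠ 0 and set J₀ = (1 − e^{−f})/M₀(f), u₀(x) = w₀(f,x)/M₀(f), c₁ = M₁(f)/M₀(f)³ + J₀/2, and u₁(x) = (c₁/J₀)·u₀(x) − u₀(x)·∫₀ˣ u₀(s) ds − w₁(f,x)/(M₀(f)³·J₀). Then u₁ is continuously differentiable and satisfies: (i) (φ'(x) − f)·u₁(x) + u₁'(x) = −c₁ + J₀·∫₀ˣ u₀(s) ds for all x; (ii) u₁(x+1) = u₁(x) − u₀(x) for all x; (iii) ∫₀¹ u₁(x) dx = 0. Equivalently, the flux of u₁ satisfies −((φ'−f)u₁ + u₁') = M₁(f)/M₀(f)³ + J₀/2 − J₀·∫₀ˣ u₀(s) ds. -/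

import Mathlib

open MeasureTheory intervalIntegral Asymptotics Filter

noncomputable def w0 (φ : ℝ → ℝ) (f x : ℝ) : ℝ :=
  ∫ s in (0:ℝ)..1, Real.exp (φ (x + s) - φ x - f * s)

noncomputable def M0 (φ : ℝ → ℝ) (f : ℝ) : ℝ := ∫ x in (0:ℝ)..1, w0 φ f x

noncomputable def w1 (φ : ℝ → ℝ) (f x : ℝ) : ℝ :=
  ∫ s in (0:ℝ)..1, (w0 φ f (x + s)) ^ 2 * Real.exp (φ (x + s) - φ x - f * s)

noncomputable def M1 (φ : ℝ → ℝ) (f : ℝ) : ℝ := ∫ x in (0:ℝ)..1, w1 φ f x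


private lemma primitive_hasDeriv (g : ℝ → ℝ) (hg : Continuous g) (x : ℝ) :
    HasDerivAt (fun u => ∫ t in (0:ℝ)..u, g t) (g x) x :=
  intervalIntegral.integral_hasDerivAt_right (hg.intervalIntegrable _ _)
    (hg.stronglyMeasurableAtFilter _ _) hg.continuousAt

/-- Generic derivative lemma for `x ↦ exp(f x − φ x) * ∫_x^{x+1} g`. -/
private lemma key_hasDeriv (φ : ℝ → ℝ) (hφ : ContDiff ℝ 1 φ) (f : ℝ)
    (g : ℝ → ℝ) (hg : Continuous g) (hgper : ∀ t, g (t + 1) = Real.exp (-f) * g t)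
    (x : ℝ) :
    HasDerivAt (fun x => Real.exp (f * x - φ x) * ∫ t in x..(x + 1), g t)
      ((f - deriv φ x) * (Real.exp (f * x - φ x) * ∫ t in x..(x + 1), g t)
        + (Real.exp (-f) - 1) * (Real.exp (f * x - φ x) * g x)) x := by
  have hGrep : (fun x => ∫ t in x..(x + 1), g t)
      = fun x => (∫ t in (0:ℝ)..(x + 1), g t) - ∫ t in (0:ℝ)..x, g t := by
    funext y
    rw [intervalIntegral.integral_interval_sub_left (hg.intervalIntegrable _ _)
      (hg.intervalIntegrable _ _)]
  have hG : HasDerivAt (fun x => ∫ t in x..(x + 1), g t) (g (x + 1) - g x) x := by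
    rw [hGrep]
    have h1 : HasDerivAt (fun x : ℝ => ∫ t in (0:ℝ)..(x + 1), g t) (g (x + 1)) x := by
      have := (primitive_hasDeriv g hg (x + 1)).comp x ((hasDerivAt_id x).add_const 1)
      exact this.congr_deriv (mul_one _)
    exact h1.sub (primitive_hasDeriv g hg x)
  have hψ : HasDerivAt (fun x => Real.exp (f * x - φ x))
      (Real.exp (f * x - φ x) * (f - deriv φ x)) x := by
    have hd : HasDerivAt (fun x => f * x - φ x) (f - deriv φ x) x := by
      have := ((hasDerivAt_id x).const_mul f).sub
        ((hφ.differentiable one_ne_zero x).hasDerivAt)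
      exact this.congr_deriv (by ring)
    exact hd.exp
  refine (hψ.mul hG).congr_deriv ?_
  rw [hgper x]
  ring

lemma w0_rep (φ : ℝ → ℝ) (f x : ℝ) :
    w0 φ f x = Real.exp (f * x - φ x) * ∫ t in x..(x + 1), Real.exp (φ t - f * t) := by
  have h1 : (∫ t in x..(x + 1), Real.exp (φ t - f * t))
      = ∫ s in (0:ℝ)..1, Real.exp (φ (x + s) - f * (x + s)) := by
    rw [intervalIntegral.integral_comp_add_left (fun t => Real.exp (φ t - f * t)) x]
    norm_num
  rw [h1, ← intervalIntegral.integral_const_mul]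
  apply intervalIntegral.integral_congr
  intro s _
  beta_reduce
  rw [← Real.exp_add]
  ring_nf

lemma w1_rep (φ : ℝ → ℝ) (f x : ℝ) :
    w1 φ f x = Real.exp (f * x - φ x)
      * ∫ t in x..(x + 1), (w0 φ f t) ^ 2 * Real.exp (φ t - f * t) := by
  have h1 : (∫ t in x..(x + 1), (w0 φ f t) ^ 2 * Real.exp (φ t - f * t))
      = ∫ s in (0:ℝ)..1, (w0 φ f (x + s)) ^ 2 * Real.exp (φ (x + s) - f * (x + s)) := by
    rw [intervalIntegral.integral_comp_add_left
      (fun t => (w0 φ f t) ^ 2 * Real.exp (φ t - f * t)) x]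
    norm_num
  rw [h1, ← intervalIntegral.integral_const_mul]
  apply intervalIntegral.integral_congr
  intro s _
  beta_reduce
  rw [mul_comm (Real.exp (f * x - φ x)), mul_assoc, ← Real.exp_add]
  ring_nf

section

variable {φ : ℝ → ℝ} {f : ℝ}

lemma E_cont (hφc : Continuous φ) : Continuous fun t => Real.exp (φ t - f * t) := by
  fun_prop

lemma E_per (hφper : ∀ x, φ (x + 1) = φ x) (t : ℝ) :
    Real.exp (φ (t + 1) - f * (t + 1)) = Real.exp (-f) * Real.exp (φ t - f * t) := by
  rw [hφper, ← Real.exp_add]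
  ring_nf

lemma exp_cancel (φ : ℝ → ℝ) (f x : ℝ) :
    Real.exp (f * x - φ x) * Real.exp (φ x - f * x) = 1 := by
  rw [← Real.exp_add, show f * x - φ x + (φ x - f * x) = 0 by ring, Real.exp_zero]

lemma w0_hasDerivAt (hφ : ContDiff ℝ 1 φ) (hφper : ∀ x, φ (x + 1) = φ x) (x : ℝ) :
    HasDerivAt (w0 φ f) ((f - deriv φ x) * w0 φ f x + (Real.exp (-f) - 1)) x := by
  have hrep : w0 φ f = fun x => Real.exp (f * x - φ x)
      * ∫ t in x..(x + 1), Real.exp (φ t - f * t) := funext fun x => w0_rep φ f x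
  have hkey := key_hasDeriv φ hφ f _ (E_cont hφ.continuous) (E_per hφper) x
  beta_reduce at hkey
  rw [exp_cancel, mul_one] at hkey
  rw [hrep]
  exact hkey

lemma w0_cont (hφ : ContDiff ℝ 1 φ) (hφper : ∀ x, φ (x + 1) = φ x) :
    Continuous (w0 φ f) := by
  have : Differentiable ℝ (w0 φ f) :=
    fun x => (w0_hasDerivAt hφ hφper x).differentiableAt
  exact this.continuous

lemma w0_per (hφper : ∀ x, φ (x + 1) = φ x) (x : ℝ) : w0 φ f (x + 1) = w0 φ f x := by
  unfold w0
  apply intervalIntegral.integral_congr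
  intro s _
  beta_reduce
  rw [show x + 1 + s = x + s + 1 by ring, hφper (x + s), hφper x]

lemma w0_pos (hφ : ContDiff ℝ 1 φ) (x : ℝ) : 0 < w0 φ f x := by
  unfold w0
  apply intervalIntegral.intervalIntegral_pos_of_pos_on
  · apply Continuous.intervalIntegrable
    have := hφ.continuous
    fun_prop
  · intro s _; positivity
  · norm_num

lemma M0_pos (hφ : ContDiff ℝ 1 φ) (hφper : ∀ x, φ (x + 1) = φ x) : 0 < M0 φ f := by
  unfold M0
  apply intervalIntegral.intervalIntegral_pos_of_pos_on
  · exact (w0_cont hφ hφper).intervalIntegrable _ _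
  · intro s _; exact w0_pos hφ s
  · norm_num

lemma w1_hasDerivAt (hφ : ContDiff ℝ 1 φ) (hφper : ∀ x, φ (x + 1) = φ x) (x : ℝ) :
    HasDerivAt (w1 φ f)
      ((f - deriv φ x) * w1 φ f x + (Real.exp (-f) - 1) * (w0 φ f x) ^ 2) x := by
  have hFcont : Continuous fun t => (w0 φ f t) ^ 2 * Real.exp (φ t - f * t) := by
    have h1 := w0_cont (f := f) hφ hφper
    have h2 := hφ.continuous
    fun_prop
  have hFper : ∀ t, (w0 φ f (t + 1)) ^ 2 * Real.exp (φ (t + 1) - f * (t + 1))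
      = Real.exp (-f) * ((w0 φ f t) ^ 2 * Real.exp (φ t - f * t)) := by
    intro t
    rw [w0_per hφper, E_per hφper]
    ring
  have hrep : w1 φ f = fun x => Real.exp (f * x - φ x)
      * ∫ t in x..(x + 1), (w0 φ f t) ^ 2 * Real.exp (φ t - f * t) :=
    funext fun x => w1_rep φ f x
  have hkey := key_hasDeriv φ hφ f _ hFcont hFper x
  beta_reduce at hkey
  rw [show Real.exp (f * x - φ x) * ((w0 φ f x) ^ 2 * Real.exp (φ x - f * x))
        = (w0 φ f x) ^ 2 * (Real.exp (f * x - φ x) * Real.exp (φ x - f * x)) by ring,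
      exp_cancel, mul_one] at hkey
  rw [hrep]
  exact hkey

lemma w1_cont (hφ : ContDiff ℝ 1 φ) (hφper : ∀ x, φ (x + 1) = φ x) :
    Continuous (w1 φ f) := by
  have : Differentiable ℝ (w1 φ f) :=
    fun x => (w1_hasDerivAt hφ hφper x).differentiableAt
  exact this.continuous

lemma w1_per (hφper : ∀ x, φ (x + 1) = φ x) (x : ℝ) : w1 φ f (x + 1) = w1 φ f x := by
  unfold w1
  apply intervalIntegral.integral_congr
  intro s _
  beta_reduce
  rw [show x + 1 + s = x + s + 1 by ring, w0_per hφper, hφper (x + s), hφper x]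

end
noncomputable def U0 (φ : ℝ → ℝ) (f x : ℝ) : ℝ := w0 φ f x / M0 φ f

noncomputable def V0 (φ : ℝ → ℝ) (f x : ℝ) : ℝ := ∫ s in (0:ℝ)..x, U0 φ f s

section

variable {φ : ℝ → ℝ} {f : ℝ}

lemma U0_cont (hφ : ContDiff ℝ 1 φ) (hφper : ∀ x, φ (x + 1) = φ x) :
    Continuous (U0 φ f) := (w0_cont hφ hφper).div_const _

lemma U0_hasDerivAt (hφ : ContDiff ℝ 1 φ) (hφper : ∀ x, φ (x + 1) = φ x) (x : ℝ) :
    HasDerivAt (U0 φ f)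
      (((f - deriv φ x) * w0 φ f x + (Real.exp (-f) - 1)) / M0 φ f) x :=
  (w0_hasDerivAt hφ hφper x).div_const _

lemma U0_per (hφper : ∀ x, φ (x + 1) = φ x) (x : ℝ) : U0 φ f (x + 1) = U0 φ f x := by
  unfold U0; rw [w0_per hφper]

lemma U0_int (hφ : ContDiff ℝ 1 φ) (hφper : ∀ x, φ (x + 1) = φ x) :
    (∫ s in (0:ℝ)..1, U0 φ f s) = 1 := by
  unfold U0
  rw [intervalIntegral.integral_div]
  exact div_self (ne_of_gt (M0_pos hφ hφper))

lemma V0_hasDerivAt (hφ : ContDiff ℝ 1 φ) (hφper : ∀ x, φ (x + 1) = φ x) (x : ℝ) :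
    HasDerivAt (V0 φ f) (U0 φ f x) x :=
  primitive_hasDeriv (U0 φ f) (U0_cont hφ hφper) x

lemma V0_cont (hφ : ContDiff ℝ 1 φ) (hφper : ∀ x, φ (x + 1) = φ x) :
    Continuous (V0 φ f) := by
  have : Differentiable ℝ (V0 φ f) := fun x => (V0_hasDerivAt hφ hφper x).differentiableAt
  exact this.continuous

lemma V0_shift (hφ : ContDiff ℝ 1 φ) (hφper : ∀ x, φ (x + 1) = φ x) (x : ℝ) :
    V0 φ f (x + 1) = V0 φ f x + 1 := by
  have hc : Continuous (U0 φ f) := U0_cont hφ hφper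
  have h1 : V0 φ f (x + 1) - V0 φ f x = ∫ s in x..(x + 1), U0 φ f s :=
    intervalIntegral.integral_interval_sub_left (hc.intervalIntegrable _ _)
      (hc.intervalIntegrable _ _)
  have hper : Function.Periodic (U0 φ f) 1 := fun t => U0_per hφper t
  have h2 := hper.intervalIntegral_add_eq x 0
  have h3 : (∫ s in (0:ℝ)..(0 + 1 : ℝ), U0 φ f s) = 1 := by
    rw [zero_add]; exact U0_int hφ hφper
  have h4 : (∫ s in x..(x + 1), U0 φ f s) = 1 := h2.trans h3
  linarith [h1, h4]

lemma V0_one (hφ : ContDiff ℝ 1 φ) (hφper : ∀ x, φ (x + 1) = φ x) :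
    V0 φ f 1 = 1 := U0_int hφ hφper

lemma UV_int (hφ : ContDiff ℝ 1 φ) (hφper : ∀ x, φ (x + 1) = φ x) :
    (∫ x in (0:ℝ)..1, U0 φ f x * V0 φ f x) = 1 / 2 := by
  have hd : ∀ x ∈ Set.uIcc (0:ℝ) 1, HasDerivAt (fun x => V0 φ f x ^ 2 / 2)
      (U0 φ f x * V0 φ f x) x := by
    intro x _
    have := ((V0_hasDerivAt (f := f) hφ hφper x).pow 2).div_const 2
    refine this.congr_deriv ?_
    ring
  have hint : IntervalIntegrable (fun x => U0 φ f x * V0 φ f x) volume 0 1 :=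
    ((U0_cont hφ hφper).mul (V0_cont hφ hφper)).intervalIntegrable _ _
  rw [intervalIntegral.integral_eq_sub_of_hasDerivAt hd hint]
  have h0 : V0 φ f 0 = 0 := intervalIntegral.integral_same
  rw [V0_one hφ hφper, h0]
  norm_num

end

/-- With `J₀ = (1 − e^{−f})/M₀(f)`, `u₀ = w₀/M₀`,
`c₁ = M₁/M₀³ + J₀/2` and
`u₁(x) = (c₁/J₀)·u₀(x) − u₀(x)·∫₀ˣ u₀ − w₁(f,x)/(M₀³·J₀)`,
the function `u₁` is C¹ and satisfies
(i) `(φ' − f)·u₁ + u₁' = −c₁ + J₀·∫₀ˣ u₀`,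
(ii) `u₁(x+1) = u₁(x) − u₀(x)`, (iii) `∫₀¹ u₁ = 0`; equivalently the flux of
`u₁` is `M₁/M₀³ + J₀/2 − J₀·∫₀ˣ u₀`. -/
theorem stmt_4 (φ : ℝ → ℝ) (hφ : ContDiff ℝ 1 φ) (hφper : ∀ x, φ (x + 1) = φ x)
    (f : ℝ) (hf : f ≠ 0)
    (J0 c1 : ℝ) (u0 u1 : ℝ → ℝ)
    (hJ0 : J0 = (1 - Real.exp (-f)) / M0 φ f)
    (hu0 : ∀ x, u0 x = w0 φ f x / M0 φ f)
    (hc1 : c1 = M1 φ f / (M0 φ f) ^ 3 + J0 / 2)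
    (hu1 : ∀ x, u1 x = (c1 / J0) * u0 x - u0 x * (∫ s in (0:ℝ)..x, u0 s)
        - w1 φ f x / ((M0 φ f) ^ 3 * J0)) :
    ContDiff ℝ 1 u1 ∧
    (∀ x, (deriv φ x - f) * u1 x + deriv u1 x
        = -c1 + J0 * ∫ s in (0:ℝ)..x, u0 s) ∧
    (∀ x, u1 (x + 1) = u1 x - u0 x) ∧
    (∫ x in (0:ℝ)..1, u1 x) = 0 ∧
    (∀ x, -((deriv φ x - f) * u1 x + deriv u1 x)
        = M1 φ f / (M0 φ f) ^ 3 + J0 / 2 - J0 * ∫ s in (0:ℝ)..x, u0 s) := by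
  have hM0 : M0 φ f ≠ 0 := ne_of_gt (M0_pos hφ hφper)
  have hef : (1 : ℝ) - Real.exp (-f) ≠ 0 := by
    intro h
    apply hf
    have h1 : Real.exp (-f) = 1 := by linarith
    have h2 := (Real.exp_eq_one_iff (-f)).1 h1
    linarith
  have hJ0ne : J0 ≠ 0 := by rw [hJ0]; exact div_ne_zero hef hM0
  have hJM : Real.exp (-f) - 1 = -(J0 * M0 φ f) := by
    rw [hJ0]; field_simp
    ring
  have hu0E : u0 = U0 φ f := by funext x; rw [hu0 x]; rfl
  have hu1E : u1 = fun x => (c1 / J0) * U0 φ f x - U0 φ f x * V0 φ f x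
      - w1 φ f x / ((M0 φ f) ^ 3 * J0) := by
    funext x
    rw [hu1 x, hu0E]
    rfl
  have hV0x : ∀ x, (∫ s in (0:ℝ)..x, U0 φ f s) = V0 φ f x := fun _ => rfl
  -- derivative of u1
  have hD : ∀ x, HasDerivAt u1
      ((c1 / J0) * (((f - deriv φ x) * w0 φ f x + (Real.exp (-f) - 1)) / M0 φ f)
        - ((((f - deriv φ x) * w0 φ f x + (Real.exp (-f) - 1)) / M0 φ f) * V0 φ f x
            + U0 φ f x * U0 φ f x)
        - ((f - deriv φ x) * w1 φ f x + (Real.exp (-f) - 1) * (w0 φ f x) ^ 2)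
            / ((M0 φ f) ^ 3 * J0)) x := by
    intro x
    rw [hu1E]
    exact (((U0_hasDerivAt hφ hφper x).const_mul (c1 / J0)).sub
      ((U0_hasDerivAt hφ hφper x).mul (V0_hasDerivAt hφ hφper x))).sub
      ((w1_hasDerivAt hφ hφper x).div_const _)
  have hu1c1 : ContDiff ℝ 1 u1 := by
    rw [contDiff_one_iff_deriv]
    refine ⟨fun x => (hD x).differentiableAt, ?_⟩
    have hde : deriv u1 = fun x =>
        (c1 / J0) * (((f - deriv φ x) * w0 φ f x + (Real.exp (-f) - 1)) / M0 φ f)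
        - ((((f - deriv φ x) * w0 φ f x + (Real.exp (-f) - 1)) / M0 φ f) * V0 φ f x
            + U0 φ f x * U0 φ f x)
        - ((f - deriv φ x) * w1 φ f x + (Real.exp (-f) - 1) * (w0 φ f x) ^ 2)
            / ((M0 φ f) ^ 3 * J0) := funext fun x => (hD x).deriv
    rw [hde]
    have h1 : Continuous (deriv φ) := hφ.continuous_deriv le_rfl
    have h2 : Continuous (w0 φ f) := w0_cont hφ hφper
    have h3 : Continuous (w1 φ f) := w1_cont hφ hφper
    have h4 : Continuous (U0 φ f) := U0_cont hφ hφper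
    have h5 : Continuous (V0 φ f) := V0_cont hφ hφper
    fun_prop
  have hODE : ∀ x, (deriv φ x - f) * u1 x + deriv u1 x
      = -c1 + J0 * ∫ s in (0:ℝ)..x, u0 s := by
    intro x
    rw [(hD x).deriv, hu1E, hu0E, hV0x x]
    beta_reduce
    rw [hJM, show U0 φ f x = w0 φ f x / M0 φ f from rfl]
    field_simp
    ring
  refine ⟨hu1c1, hODE, ?_, ?_, ?_⟩
  · -- quasi-periodicity
    intro x
    rw [hu1E, hu0E]
    beta_reduce
    rw [U0_per hφper, w1_per hφper, V0_shift hφ hφper]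
    ring
  · -- zero mean
    rw [hu1E]
    have h4 : Continuous (U0 φ f) := U0_cont hφ hφper
    have h5 : Continuous (V0 φ f) := V0_cont hφ hφper
    have h3 : Continuous (w1 φ f) := w1_cont hφ hφper
    have hA : IntervalIntegrable (fun x => (c1 / J0) * U0 φ f x) volume 0 1 :=
      (continuous_const.mul h4).intervalIntegrable _ _
    have hB : IntervalIntegrable (fun x => U0 φ f x * V0 φ f x) volume 0 1 :=
      (h4.mul h5).intervalIntegrable _ _
    have hC : IntervalIntegrable (fun x => w1 φ f x / ((M0 φ f) ^ 3 * J0)) volume 0 1 :=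
      (h3.div_const _).intervalIntegrable _ _
    rw [intervalIntegral.integral_sub (hA.sub hB) hC, intervalIntegral.integral_sub hA hB,
      intervalIntegral.integral_const_mul, U0_int hφ hφper, UV_int hφ hφper,
      intervalIntegral.integral_div]
    have hM1 : (∫ x in (0:ℝ)..1, w1 φ f x) = M1 φ f := rfl
    rw [hM1, hc1]
    field_simp
    ring
  · -- flux form
    intro x
    rw [hODE x, hc1]
    ring
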